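/- Let X be a characteristic subspace for a nilpotent f, and suppose in the exponent decomposition V = ⟨U_{a_1}⟩ ⊕ ⋯ ⊕ ⟨U_{a_m}⟩ we have X ∩ ⟨U_{a_i}⟩ = f^{c_i}⟨U_{a_i}⟩ for each i. Then for i < j: c_i ≤ c_j and a_i − c_i ≤ a_j − c_j. -/

import Mathlib

open LinearMap

variable {K : Type*} [Field K] {V : Type*} [AddCommGroup V] [Module K V]

/-- `X` is hyperinvariant for `f`: invariant under every endomorphism commuting with `f`. -/
def Hinv (f : V →ₗ[K] V) (X : Submodule K V) : Prop :=
  ∀ g : V →ₗ[K] V, g ∘ₗ f = f ∘ₗ g → X.map g ≤ X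

/-- `X` is characteristic for `f`: `f`-invariant and fixed by every automorphism commuting with `f`. -/
def Chinv (f : V →ₗ[K] V) (X : Submodule K V) : Prop :=
  X.map f ≤ X ∧
    ∀ α : V ≃ₗ[K] V, (α : V →ₗ[K] V) ∘ₗ f = f ∘ₗ (α : V →ₗ[K] V) →
      X.map (α : V →ₗ[K] V) = X

/-- The cyclic subspace generated by `x`. -/
def cyc (f : V →ₗ[K] V) (x : V) : Submodule K V :=
  Submodule.span K (Set.range fun i : ℕ => (f ^ i) x)

/-- `x` has exponent `ℓ`. -/
def ExpEq (f : V →ₗ[K] V) (x : V) (ℓ : ℕ) : Prop :=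
  (f ^ ℓ) x = 0 ∧ ∀ j < ℓ, (f ^ j) x ≠ 0

/-- `x` has height `q`. -/
def HeightEq (f : V →ₗ[K] V) (x : V) (q : ℕ) : Prop :=
  x ∈ LinearMap.range (f ^ q) ∧ x ∉ LinearMap.range (f ^ (q + 1))

/-- The `r`-th Ulm invariant: number of Jordan blocks of size `r` (for `r ≥ 1`). -/
noncomputable def ulm (f : V →ₗ[K] V) (r : ℕ) : ℕ :=
  Module.finrank K ↥(LinearMap.ker f ⊓ LinearMap.range (f ^ (r - 1))) -
    Module.finrank K ↥(LinearMap.ker f ⊓ LinearMap.range (f ^ r))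

/-- `u` is a generator tuple with exponents `t`. -/
def IsGenTuple {k : ℕ} (f : V →ₗ[K] V) (u : Fin k → V) (t : Fin k → ℕ) : Prop :=
  (∀ i, ExpEq f (u i) (t i)) ∧ DirectSum.IsInternal (fun i => cyc f (u i))

/-- The summand `⟨U_a⟩` of all cyclic subspaces whose generator has exponent `a`. -/
def subU {k : ℕ} (f : V →ₗ[K] V) (u : Fin k → V) (t : Fin k → ℕ) (a : ℕ) : Submodule K V :=
  ⨆ i ∈ {i : Fin k | t i = a}, cyc f (u i)

lemma pow_mem_cyc (f : V →ₗ[K] V) (x : V) (m : ℕ) : (f ^ m) x ∈ cyc f x :=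
  Submodule.subset_span ⟨m, rfl⟩

lemma mem_cyc_self (f : V →ₗ[K] V) (x : V) : x ∈ cyc f x :=
  Submodule.subset_span ⟨0, by simp⟩

lemma pow_stable {f : V →ₗ[K] V} {x : V} {a : ℕ} (h : (f ^ a) x = 0)
    {m : ℕ} (hm : a ≤ m) : (f ^ m) x = 0 := by
  have h2 : f ^ m = f ^ (m - a) * f ^ a := by rw [← pow_add]; congr 1; omega
  rw [h2, Module.End.mul_apply, h, map_zero]

lemma pow_apply_succ (f : V →ₗ[K] V) (n : ℕ) (x : V) :
    f ((f ^ n) x) = (f ^ (n + 1)) x := by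
  rw [pow_succ', Module.End.mul_apply]

lemma lin_indep_iterates {f : V →ₗ[K] V} {x : V} {a : ℕ} (h : ExpEq f x a) :
    LinearIndependent K (fun m : Fin a => (f ^ (m : ℕ)) x) := by
  rw [Fintype.linearIndependent_iff]
  intro g hg
  suffices H : ∀ n, ∀ hn : n < a, g ⟨n, hn⟩ = 0 by
    intro i; have := H i.1 i.2; simpa using this
  intro n
  induction n using Nat.strong_induction_on with
  | _ n IH =>
    intro hn
    have key : ∑ i : Fin a, g i • (f ^ (a - 1 - n + (i : ℕ))) x = 0 := by
      have h2 := congrArg (f ^ (a - 1 - n)) hg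
      rw [map_zero, map_sum] at h2
      rw [← h2]
      refine Finset.sum_congr rfl fun i _ => ?_
      rw [map_smul, ← Module.End.mul_apply, ← pow_add]
    have key2 : g ⟨n, hn⟩ • (f ^ (a - 1 - n + (n : ℕ))) x = 0 := by
      rw [← key]
      refine (Finset.sum_eq_single_of_mem (f := fun i : Fin a => g i • (f ^ (a - 1 - n + (i : ℕ))) x)
        (⟨n, hn⟩ : Fin a) (Finset.mem_univ _) ?_).symm
      intro b _ hb
      show g b • (f ^ (a - 1 - n + (b : ℕ))) x = 0
      rcases lt_or_gt_of_ne (fun hbn : (b : ℕ) = n => hb (Fin.ext hbn)) with hlt | hgt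
      · rw [show g b = g ⟨(b : ℕ), b.2⟩ from by rw [Fin.eta], IH b hlt b.2, zero_smul]
      · rw [pow_stable h.1 (by omega), smul_zero]
    rw [show a - 1 - n + n = a - 1 from by omega] at key2
    rcases smul_eq_zero.1 key2 with h0 | h0
    · exact h0
    · exact absurd h0 (h.2 (a - 1) (by omega))

lemma span_iterates_eq {f : V →ₗ[K] V} {x : V} {a : ℕ} (h : (f ^ a) x = 0) :
    Submodule.span K (Set.range fun m : Fin a => (f ^ (m : ℕ)) x) = cyc f x := by
  apply le_antisymm
  · exact Submodule.span_le.2 (by rintro _ ⟨m, rfl⟩; exact pow_mem_cyc f x _)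
  · refine Submodule.span_le.2 ?_
    rintro _ ⟨i, rfl⟩
    by_cases hi : i < a
    · exact Submodule.subset_span ⟨⟨i, hi⟩, rfl⟩
    · have h0 : (fun i : ℕ => (f ^ i) x) i = 0 := pow_stable h (le_of_not_gt hi)
      rw [h0]; exact zero_mem _

noncomputable def cycBasis {f : V →ₗ[K] V} {x : V} {a : ℕ} (h : ExpEq f x a) :
    Module.Basis (Fin a) K (cyc f x) :=
  (Module.Basis.span (lin_indep_iterates h)).map (LinearEquiv.ofEq _ _ (span_iterates_eq h.1))

@[simp] lemma cycBasis_apply {f : V →ₗ[K] V} {x : V} {a : ℕ} (h : ExpEq f x a) (m : Fin a) :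
    (cycBasis h m : V) = (f ^ (m : ℕ)) x := by
  simp [cycBasis, Module.Basis.span_apply]

lemma cyc_le_subU {k : ℕ} (f : V →ₗ[K] V) (u : Fin k → V) (t : Fin k → ℕ) {l : Fin k} {a : ℕ}
    (hl : t l = a) : cyc f (u l) ≤ subU f u t a :=
  le_biSup (fun i => cyc f (u i)) hl

lemma subU_le_ker {k : ℕ} {f : V →ₗ[K] V} {u : Fin k → V} {t : Fin k → ℕ}
    (hu : IsGenTuple f u t) (a : ℕ) {v : V} (hv : v ∈ subU f u t a) : (f ^ a) v = 0 := by
  have hle : subU f u t a ≤ ker (f ^ a) := by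
    refine iSup₂_le fun l hl => Submodule.span_le.2 ?_
    rintro _ ⟨m, rfl⟩
    have hl' : t l = a := hl
    simp only [SetLike.mem_coe, mem_ker]
    have : (f ^ a) ((f ^ m) (u l)) = (f ^ m) ((f ^ (t l)) (u l)) := by
      rw [← Module.End.mul_apply, ← Module.End.mul_apply, ← pow_add, ← pow_add, hl', add_comm]
    rw [this, (hu.1 l).1, map_zero]
  exact mem_ker.1 (hle hv)

lemma exists_transfer {k : ℕ} {f : V →ₗ[K] V} {u : Fin k → V} {t : Fin k → ℕ}
    (hu : IsGenTuple f u t) (p q : Fin k) (hqp : q ≠ p) (s : ℕ)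
    (hy : (f ^ (t p + s)) (u q) = 0) :
    ∃ g : V →ₗ[K] V, g ∘ₗ f = f ∘ₗ g ∧ g ∘ₗ g = 0 ∧
      ∀ l m, g ((f ^ m) (u l)) = if l = p then (f ^ (m + s)) (u q) else 0 := by
  classical
  let B : Module.Basis (Σ l : Fin k, Fin (t l)) K V := hu.2.collectedBasis fun l => cycBasis (hu.1 l)
  have hB : ∀ j : Σ l : Fin k, Fin (t l), B j = (f ^ (j.2 : ℕ)) (u j.1) := by
    intro j
    simp [B, DirectSum.IsInternal.collectedBasis_coe]
  let g : V →ₗ[K] V := B.constr K fun j => if j.1 = p then (f ^ ((j.2 : ℕ) + s)) (u q) else 0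
  have gval : ∀ l m, g ((f ^ m) (u l)) = if l = p then (f ^ (m + s)) (u q) else 0 := by
    intro l m
    by_cases hm : m < t l
    · have h1 : (f ^ m) (u l) = B ⟨l, ⟨m, hm⟩⟩ := (hB ⟨l, ⟨m, hm⟩⟩).symm
      rw [h1]
      exact B.constr_basis K _ _
    · rw [pow_stable (hu.1 l).1 (le_of_not_gt hm), map_zero]
      by_cases hl : l = p
      · rw [if_pos hl]
        subst hl
        exact (pow_stable hy (by omega)).symm
      · rw [if_neg hl]
  refine ⟨g, ?_, ?_, gval⟩
  · apply B.ext
    intro j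
    rw [comp_apply, comp_apply, hB j, pow_apply_succ, gval, gval, apply_ite f, map_zero,
      pow_apply_succ, show (j.2 : ℕ) + 1 + s = (j.2 : ℕ) + s + 1 from by omega]
  · apply B.ext
    intro j
    rw [comp_apply, LinearMap.zero_apply, hB j, gval]
    split
    · rw [gval, if_neg hqp]
    · exact map_zero g

lemma chinv_apply_mem {f g : V →ₗ[K] V} {X : Submodule K V} (hX : Chinv f X)
    (hcom : g ∘ₗ f = f ∘ₗ g) (hg2 : g ∘ₗ g = 0) {x : V} (hx : x ∈ X) : g x ∈ X := by
  have hg2' : ∀ v, g (g v) = 0 := fun v => by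
    have := LinearMap.congr_fun hg2 v; simpa using this
  let α : V ≃ₗ[K] V := LinearEquiv.ofLinear (1 + g) (1 - g)
    (by ext v; simp [hg2' v])
    (by ext v; simp [hg2' v])
  have hcoe : (α : V →ₗ[K] V) = 1 + g := rfl
  have hα : (α : V →ₗ[K] V) ∘ₗ f = f ∘ₗ (α : V →ₗ[K] V) := by
    rw [hcoe, add_comp, comp_add, Module.End.one_eq_id, id_comp, comp_id, hcom]
  have hmap := hX.2 α hα
  have h1 : (α : V →ₗ[K] V) x ∈ X := hmap ▸ Submodule.mem_map_of_mem hx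
  have h2 : (α : V →ₗ[K] V) x = x + g x := by
    rw [hcoe]; simp
  rw [h2] at h1
  simpa using X.sub_mem h1 hx


theorem stmt8 [FiniteDimensional K V] (f : V →ₗ[K] V) (hf : IsNilpotent f)
    {k : ℕ} (u : Fin k → V) (t : Fin k → ℕ) (ht : Monotone t) (hu : IsGenTuple f u t)
    (X : Submodule K V) (hX : Chinv f X) (c : ℕ → ℕ)
    (hc : ∀ a ∈ Set.range t, c a ≤ a ∧ X ⊓ subU f u t a = (subU f u t a).map (f ^ c a)) :
    ∀ a ∈ Set.range t, ∀ b ∈ Set.range t, a < b → c a ≤ c b ∧ a - c a ≤ b - c b := by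
  classical
  rintro a ⟨p, hp⟩ b ⟨q, hq⟩ hab
  obtain ⟨hca, hXa⟩ := hc a ⟨p, hp⟩
  obtain ⟨hcb, hXb⟩ := hc b ⟨q, hq⟩
  have hqp : q ≠ p := by intro h; rw [h, hp] at hq; omega
  have hexp_p : ExpEq f (u p) a := hp ▸ hu.1 p
  have hexp_q : ExpEq f (u q) b := hq ▸ hu.1 q
  have hupU : u p ∈ subU f u t a := cyc_le_subU f u t hp (mem_cyc_self f (u p))
  have huqU : u q ∈ subU f u t b := cyc_le_subU f u t hq (mem_cyc_self f (u q))
  constructor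
  · -- c a ≤ c b
    by_contra hlt
    push_neg at hlt
    obtain ⟨g, hgf, hg2, hgval⟩ := exists_transfer hu q p (Ne.symm hqp) 0
      (by rw [add_zero, hq]; exact pow_stable hexp_p.1 (by omega))
    have hx1 : (f ^ c b) (u q) ∈ X := by
      have hm : (f ^ c b) (u q) ∈ (subU f u t b).map (f ^ c b) :=
        Submodule.mem_map_of_mem huqU
      rw [← hXb] at hm
      exact hm.1
    have hx2 : (f ^ (c b + 0)) (u p) ∈ X := by
      have := chinv_apply_mem hX hgf hg2 hx1
      rwa [hgval q (c b), if_pos rfl] at this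
    rw [add_zero] at hx2
    have hx3 : (f ^ c b) (u p) ∈ X ⊓ subU f u t a :=
      ⟨hx2, cyc_le_subU f u t hp (pow_mem_cyc f (u p) _)⟩
    rw [hXa] at hx3
    obtain ⟨w, hw, hww⟩ := hx3
    have hzero : (f ^ (a - c a + c b)) (u p) = 0 := by
      rw [pow_add, Module.End.mul_apply, ← hww, ← Module.End.mul_apply, ← pow_add,
        show a - c a + c a = a from by omega]
      exact subU_le_ker hu a hw
    exact absurd hzero (hexp_p.2 _ (by omega))
  · -- a - c a ≤ b - c b
    by_contra hlt
    push_neg at hlt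
    have hd : b - a + c a < c b := by omega
    obtain ⟨g, hgf, hg2, hgval⟩ := exists_transfer hu p q hqp (b - a)
      (by rw [hp, show a + (b - a) = b from by omega]; exact hexp_q.1)
    have hx1 : (f ^ c a) (u p) ∈ X := by
      have hm : (f ^ c a) (u p) ∈ (subU f u t a).map (f ^ c a) :=
        Submodule.mem_map_of_mem hupU
      rw [← hXa] at hm
      exact hm.1
    have hx2 : (f ^ (c a + (b - a))) (u q) ∈ X := by
      have := chinv_apply_mem hX hgf hg2 hx1
      rwa [hgval p (c a), if_pos rfl] at this
    have hx3 : (f ^ (c a + (b - a))) (u q) ∈ X ⊓ subU f u t b :=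
      ⟨hx2, cyc_le_subU f u t hq (pow_mem_cyc f (u q) _)⟩
    rw [hXb] at hx3
    obtain ⟨w, hw, hww⟩ := hx3
    have hzero : (f ^ (b - c b + (c a + (b - a)))) (u q) = 0 := by
      rw [pow_add, Module.End.mul_apply, ← hww, ← Module.End.mul_apply, ← pow_add,
        show b - c b + c b = b from by omega]
      exact subU_le_ker hu b hw
    exact absurd hzero (hexp_q.2 _ (by omega))
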